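/- (Weighted sum comparison) Let λ ∈ Γ_k^+ ⊂ ℝ^n, 2 ≤ l ≤ k ≤ n, and let a_1,…,a_{l-1} ≥ 0 and b_l,…,b_k ≥ 0 be real numbers, not all zero, such that ∑_{i=1}^{l-1} a_i H_i(λ) = ∑_{j=l}^{k} b_j H_j(λ) > 0. Then ∑_{j=l}^{k} b_j H_{j-1}(λ) ≥ ∑_{i=1}^{l-1} a_i H_{i-1}(λ), with equality only if λ = c(1,…,1). -/

import Mathlib

/-- The `k`-th elementary symmetric polynomial of `x ∈ ℝⁿ`. -/
noncomputable def sigmaE (n k : ℕ) (x : Fin n → ℝ) : ℝ :=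
  ∑ s ∈ Finset.powersetCard k (Finset.univ : Finset (Fin n)), ∏ i ∈ s, x i

/-- The normalized `k`-th elementary symmetric polynomial `H_k = σ_k / C(n,k)`. -/
noncomputable def Hnorm (n k : ℕ) (x : Fin n → ℝ) : ℝ := sigmaE n k x / (n.choose k)

/-- The Gårding cone `Γ_k⁺ = {x : σ_i(x) > 0 for all 1 ≤ i ≤ k}`. -/
def GardingCone (n k : ℕ) : Set (Fin n → ℝ) :=
  {x | ∀ i, 1 ≤ i → i ≤ k → 0 < sigmaE n i x}

open Finset Polynomial

lemma sigmaE_eq_esymm (n k : ℕ) (x : Fin n → ℝ) :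
    sigmaE n k x = (Multiset.map x Finset.univ.val).esymm k := by
  rw [Finset.esymm_map_val]; rfl

lemma exists_fn (M : Multiset ℝ) :
    ∃ y : Fin (Multiset.card M) → ℝ, Multiset.map y Finset.univ.val = M := by
  refine ⟨fun i => M.toList.get (Fin.cast (by simp) i), ?_⟩
  rw [Fin.univ_val_map]
  have : List.ofFn (fun i => M.toList.get (Fin.cast (by simp : Multiset.card M = M.toList.length) i))
      = M.toList := by
    apply List.ext_get
    · simp
    · intro i h1 h2
      simp [List.get_ofFn]
  rw [this, Multiset.coe_toList]

lemma sigmaE_self (p : ℕ) (y : Fin p → ℝ) : sigmaE p p y = ∏ i, y i := by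
  have h : Finset.powersetCard p (Finset.univ : Finset (Fin p)) = {Finset.univ} := by
    have := Finset.powersetCard_self (Finset.univ : Finset (Fin p))
    simpa using this
  simp [sigmaE, h]

lemma sigmaE_zero (n : ℕ) (x : Fin n → ℝ) : sigmaE n 0 x = 1 := by
  simp [sigmaE]

lemma sigmaE_compl (p j : ℕ) (hj : j ≤ p) (y : Fin p → ℝ) :
    sigmaE p (p - j) y = ∑ t ∈ Finset.powersetCard j (Finset.univ : Finset (Fin p)),
      ∏ l ∈ tᶜ, y l := by
  rw [sigmaE]
  apply Finset.sum_nbij' (i := fun s => sᶜ) (j := fun t => tᶜ)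
  · intro s hs
    rw [Finset.mem_powersetCard_univ] at hs ⊢
    rw [Finset.card_compl, hs]
    simp; omega
  · intro t ht
    rw [Finset.mem_powersetCard_univ] at ht ⊢
    rw [Finset.card_compl, ht]
    simp
  · intro s _; simp
  · intro t _; simp
  · intro s _; rw [compl_compl]

lemma sum_powersetCard_one {ι : Type*} [DecidableEq ι] (s : Finset ι) (g : ι → ℝ) :
    ∑ t ∈ s.powersetCard 1, ∏ l ∈ t, g l = ∑ i ∈ s, g i := by
  rw [Finset.powersetCard_one, Finset.sum_map]
  simp

lemma sum_powersetCard_two {ι : Type*} [DecidableEq ι] (s : Finset ι) (g : ι → ℝ) :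
    2 * ∑ t ∈ s.powersetCard 2, ∏ l ∈ t, g l = (∑ i ∈ s, g i)^2 - ∑ i ∈ s, (g i)^2 := by
  induction s using Finset.cons_induction with
  | empty => rw [Finset.powersetCard_eq_empty.2 (by simp)]; simp
  | cons a s ha ih =>
    rw [Finset.cons_eq_insert, Finset.powersetCard_succ_insert ha, Finset.sum_union, Finset.sum_image]
    · rw [Finset.sum_insert ha, Finset.sum_insert ha]
      have h1 : ∑ t ∈ s.powersetCard 1, ∏ l ∈ insert a t, g l = g a * ∑ i ∈ s, g i := by
        rw [← sum_powersetCard_one s g, Finset.mul_sum]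
        apply Finset.sum_congr rfl
        intro t ht
        rw [Finset.mem_powersetCard] at ht
        rw [Finset.prod_insert (fun hat => ha (ht.1 hat))]
      rw [h1]
      linear_combination ih
    · intro t1 ht1 t2 ht2 he
      rw [Finset.mem_coe, Finset.mem_powersetCard] at ht1 ht2
      have e1 : t1 = (insert a t1).erase a := by
        rw [Finset.erase_insert (fun hat => ha (ht1.1 hat))]
      have e2 : t2 = (insert a t2).erase a := by
        rw [Finset.erase_insert (fun hat => ha (ht2.1 hat))]
      rw [e1, e2, he]
    · rw [Finset.disjoint_left]
      intro t ht ht'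
      rw [Finset.mem_powersetCard] at ht
      rw [Finset.mem_image] at ht'
      obtain ⟨t', ht', rfl⟩ := ht'
      exact ha (ht.1 (Finset.mem_insert_self a t'))

lemma newton_top (m : ℕ) (hm : 1 ≤ m) (y : Fin (m+1) → ℝ)
    (hy0 : sigmaE (m+1) (m+1) y ≠ 0) (hnc : ∃ i j, y i ≠ y j) :
    sigmaE (m+1) (m-1) y * sigmaE (m+1) (m+1) y * (((m+1).choose m : ℕ) : ℝ)^2
      < (sigmaE (m+1) m y)^2 * ((((m+1).choose (m-1) : ℕ) : ℝ) * (((m+1).choose (m+1) : ℕ) : ℝ)) := by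
  have hPr : sigmaE (m+1) (m+1) y = ∏ i, y i := sigmaE_self (m+1) y
  set Pr := ∏ i, y i with hPrdef
  have hPr0 : Pr ≠ 0 := by rw [← hPr]; exact hy0
  have hyi : ∀ i, y i ≠ 0 := by
    intro i hi
    exact hPr0 (Finset.prod_eq_zero (Finset.mem_univ i) hi)
  set q : Fin (m+1) → ℝ := fun i => Pr / y i with hq
  set S := ∑ i, q i with hS
  set Q := ∑ i, (q i)^2 with hQ
  -- σ_m = S
  have hF1 : sigmaE (m+1) m y = S := by
    rw [show sigmaE (m+1) m y = sigmaE (m+1) ((m+1)-1) y from rfl, sigmaE_compl (m+1) 1 (by omega)]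
    rw [Finset.powersetCard_one, Finset.sum_map]
    apply Finset.sum_congr rfl
    intro i _
    show ∏ l ∈ ({i} : Finset (Fin (m+1)))ᶜ, y l = q i
    rw [hq, eq_div_iff (hyi i)]
    have h := Finset.prod_compl_mul_prod ({i} : Finset (Fin (m+1))) y
    rw [Finset.prod_singleton] at h
    exact h
  -- σ_{m-1} * Pr = ∑ over pairs of q-products
  have hF2 : sigmaE (m+1) (m-1) y * Pr
      = ∑ t ∈ Finset.powersetCard 2 (Finset.univ : Finset (Fin (m+1))), ∏ l ∈ t, q l := by
    rw [show sigmaE (m+1) (m-1) y = sigmaE (m+1) ((m+1)-2) y from rfl,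
      sigmaE_compl (m+1) 2 (by omega), Finset.sum_mul]
    apply Finset.sum_congr rfl
    intro t ht
    rw [Finset.mem_powersetCard_univ] at ht
    have htne : ∏ l ∈ t, y l ≠ 0 := Finset.prod_ne_zero_iff.2 (fun l _ => hyi l)
    have h1 : (∏ l ∈ tᶜ, y l) * (∏ l ∈ t, y l) = Pr := Finset.prod_compl_mul_prod t y
    have h2 : ∏ l ∈ t, q l = Pr^2 / ∏ l ∈ t, y l := by
      rw [hq]
      rw [Finset.prod_div_distrib, Finset.prod_const, ht]
    rw [h2, eq_div_iff htne]
    linear_combination Pr * h1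
  have hD : 2 * (sigmaE (m+1) (m-1) y * Pr) = S^2 - Q := by
    rw [hF2, sum_powersetCard_two, hS, hQ]
  -- strict Cauchy-Schwarz
  have hkey0 : S^2 < ((m:ℝ)+1) * Q := by
    obtain ⟨i0, j0, hij⟩ := hnc
    have hqij : q i0 ≠ q j0 := by
      intro h
      rw [hq] at h
      simp only [div_eq_div_iff (hyi i0) (hyi j0)] at h
      exact hij (mul_left_cancel₀ hPr0 (by linarith))
    have hsum : ∑ i, ∑ j, (q i - q j)^2 = 2 * (((m:ℝ)+1) * Q - S^2) := by
      have hinner : ∀ i : Fin (m+1), ∑ j, (q i - q j)^2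
          = (((m:ℝ)+1) * (q i)^2 + Q) - q i * (2 * S) := by
        intro i
        have hb : ∀ j : Fin (m+1), (q i - q j)^2
            = ((q i)^2 + (q j)^2) - q j * (2 * q i) := fun j => by ring
        rw [Finset.sum_congr rfl (fun j _ => hb j), Finset.sum_sub_distrib,
          Finset.sum_add_distrib, Finset.sum_const, Finset.card_univ, Fintype.card_fin,
          ← Finset.sum_mul, ← hQ, ← hS]
        push_cast
        ring
      rw [Finset.sum_congr rfl (fun i _ => hinner i), Finset.sum_sub_distrib,
        Finset.sum_add_distrib, Finset.sum_const, Finset.card_univ, Fintype.card_fin,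
        ← Finset.sum_mul, ← Finset.mul_sum, ← hS, ← hQ]
      push_cast
      ring
    have hpos : 0 < ∑ i, ∑ j, (q i - q j)^2 := by
      apply Finset.sum_pos' (fun i _ => Finset.sum_nonneg (fun j _ => sq_nonneg _))
      refine ⟨i0, Finset.mem_univ i0, ?_⟩
      apply Finset.sum_pos' (fun j _ => sq_nonneg _)
      refine ⟨j0, Finset.mem_univ j0, ?_⟩
      have hne : q i0 - q j0 ≠ 0 := sub_ne_zero.2 hqij
      exact lt_of_le_of_ne (sq_nonneg _) (Ne.symm (pow_ne_zero 2 hne))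
    nlinarith [hsum ▸ hpos]
  -- binomial facts
  have hC1 : (((m+1).choose m : ℕ) : ℝ) = (m : ℝ) + 1 := by
    rw [Nat.choose_succ_self_right]
    push_cast
    ring
  have hC3 : (((m+1).choose (m+1) : ℕ) : ℝ) = 1 := by
    rw [Nat.choose_self]
    norm_num
  have hC2 : 2 * (((m+1).choose (m-1) : ℕ) : ℝ) = ((m:ℝ) + 1) * m := by
    have h1 : (m+1).choose (m-1) = (m+1).choose 2 := by
      have h0 : m - 1 = (m+1) - 2 := by omega
      rw [h0, Nat.choose_symm (by omega)]
    have h2 : (m+1).choose 2 * 2 = (m+1).choose 1 * ((m+1) - 1) := Nat.choose_succ_right_eq (m+1) 1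
    rw [Nat.choose_one_right, Nat.add_sub_cancel] at h2
    have h3 : (((m+1).choose 2 : ℕ) : ℝ) * 2 = ((m:ℝ)+1) * m := by exact_mod_cast h2
    rw [h1]
    linarith
  have hkey : (S^2 - Q) * ((m:ℝ)+1)^2 < S^2 * (((m:ℝ)+1) * m) := by
    nlinarith [mul_lt_mul_of_pos_left hkey0 (show (0:ℝ) < (m:ℝ)+1 by positivity)]
  rw [hPr, hF1]
  have h2 : (0:ℝ) < 2 := by norm_num
  rw [← mul_lt_mul_iff_right₀ h2]
  calc 2 * (sigmaE (m+1) (m-1) y * Pr * (((m+1).choose m : ℕ) : ℝ)^2)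
      = (S^2 - Q) * ((m:ℝ)+1)^2 := by rw [hC1]; linear_combination ((m:ℝ)+1)^2 * hD
    _ < S^2 * (((m:ℝ)+1) * m) := hkey
    _ = 2 * (S^2 * ((((m+1).choose (m-1) : ℕ) : ℝ) * (((m+1).choose (m+1) : ℕ) : ℝ))) := by
        rw [hC3]; linear_combination (-S^2) * hC2

lemma rolle_step (f : ℝ[X]) (a b : ℝ) (ha : f.IsRoot a) (hb : f.IsRoot b) (hab : a < b) :
    ∃ c ∈ Set.Ioo a b, (Polynomial.derivative f).IsRoot c := by
  obtain ⟨c, hc, hc'⟩ := exists_deriv_eq_zero (f := fun t => f.eval t) hab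
    f.continuous.continuousOn (by show f.eval a = f.eval b; rw [ha.eq_zero, hb.eq_zero])
  refine ⟨c, hc, ?_⟩
  rwa [Polynomial.deriv] at hc' 

lemma derivative_two_roots (f : ℝ[X])
    (hcard : Multiset.card f.roots = f.natDegree)
    (hdeg : 3 ≤ f.natDegree) (a b : ℝ) (ha : a ∈ f.roots) (hb : b ∈ f.roots) (hab : a ≠ b) :
    ∃ u ∈ (Polynomial.derivative f).roots, ∃ v ∈ (Polynomial.derivative f).roots, u ≠ v := by
  have hf0 : f ≠ 0 := by
    intro h
    rw [h] at hdeg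
    simp at hdeg
  have hgdeg : (Polynomial.derivative f).degree = ((f.natDegree - 1 : ℕ) : WithBot ℕ) :=
    Polynomial.degree_derivative_eq f (by omega)
  have hg0 : Polynomial.derivative f ≠ 0 := by
    intro h
    rw [h, Polynomial.degree_zero] at hgdeg
    exact (by simp : (⊥ : WithBot ℕ) ≠ ((f.natDegree - 1 : ℕ) : WithBot ℕ)) hgdeg
  have hmemg : ∀ c : ℝ, (Polynomial.derivative f).IsRoot c → c ∈ (Polynomial.derivative f).roots :=
    fun c hc => (Polynomial.mem_roots').2 ⟨hg0, hc⟩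
  have hmemf : ∀ c : ℝ, c ∈ f.roots → f.IsRoot c := fun c hc => ((Polynomial.mem_roots').1 hc).2
  suffices H : ∀ a b : ℝ, a ∈ f.roots → b ∈ f.roots → a < b →
      ∃ u ∈ (Polynomial.derivative f).roots, ∃ v ∈ (Polynomial.derivative f).roots, u ≠ v by
    rcases hab.lt_or_gt with h | h
    · exact H a b ha hb h
    · exact H b a hb ha h
  intro a b ha hb hab
  by_cases hcard3 : 3 ≤ f.roots.toFinset.card
  · -- three distinct roots
    have hne : f.roots.toFinset.Nonempty := Finset.card_pos.1 (by omega)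
    set u := f.roots.toFinset.min' hne with hu
    set w := f.roots.toFinset.max' hne with hw
    have huw : u < w := Finset.min'_lt_max'_of_card _ (by omega)
    have hmid : (f.roots.toFinset \ ({u, w} : Finset ℝ)).Nonempty := by
      apply Finset.card_pos.1
      have h1 := Finset.le_card_sdiff ({u, w} : Finset ℝ) f.roots.toFinset
      have h2 : ({u, w} : Finset ℝ).card ≤ 2 := Finset.card_insert_le _ _ |>.trans (by simp)
      omega
    obtain ⟨v, hv⟩ := hmid
    rw [Finset.mem_sdiff] at hv
    obtain ⟨hv1, hv2⟩ := hv
    simp only [Finset.mem_insert, Finset.mem_singleton, not_or] at hv2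
    have huv : u < v := lt_of_le_of_ne (Finset.min'_le _ _ hv1) (Ne.symm hv2.1)
    have hvw : v < w := lt_of_le_of_ne (Finset.le_max' _ _ hv1) hv2.2
    obtain ⟨c1, hc1, hc1'⟩ := rolle_step f u v (hmemf u (Multiset.mem_toFinset.1 (f.roots.toFinset.min'_mem hne)))
      (hmemf v (Multiset.mem_toFinset.1 hv1)) huv
    obtain ⟨c2, hc2, hc2'⟩ := rolle_step f v w (hmemf v (Multiset.mem_toFinset.1 hv1))
      (hmemf w (Multiset.mem_toFinset.1 (f.roots.toFinset.max'_mem hne))) hvw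
    exact ⟨c1, hmemg c1 hc1', c2, hmemg c2 hc2', by
      intro h
      subst h
      linarith [hc1.2, hc2.1]⟩
  · -- exactly two distinct roots, one has multiplicity ≥ 2
    have hsub : ({a, b} : Finset ℝ) ⊆ f.roots.toFinset := by
      intro t ht
      simp only [Finset.mem_insert, Finset.mem_singleton] at ht
      rcases ht with rfl | rfl
      · exact Multiset.mem_toFinset.2 ha
      · exact Multiset.mem_toFinset.2 hb
    have hcard2 : ({a, b} : Finset ℝ).card = 2 := by
      rw [Finset.card_insert_of_notMem (by simpa using hab.ne), Finset.card_singleton]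
    have heqset : f.roots.toFinset = ({a, b} : Finset ℝ) :=
      (Finset.eq_of_subset_of_card_le hsub (by omega)).symm
    have hsum : f.roots.count a + f.roots.count b = f.natDegree := by
      have := Multiset.toFinset_sum_count_eq f.roots
      rw [heqset, Finset.sum_insert (by simpa using hab.ne), Finset.sum_singleton] at this
      omega
    obtain ⟨c, hc, hc'⟩ := rolle_step f a b (hmemf a ha) (hmemf b hb) hab
    have hdouble : ∀ t : ℝ, t ∈ f.roots → 2 ≤ f.roots.count t →
        t ∈ (Polynomial.derivative f).roots := by
      intro t ht hcount
      rw [Polynomial.count_roots] at hcount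
      have := Polynomial.derivative_rootMultiplicity_of_root (hmemf t ht)
      have hpos : 0 < (Polynomial.derivative f).rootMultiplicity t := by omega
      exact hmemg t ((Polynomial.rootMultiplicity_pos hg0).1 hpos)
    rcases (by omega : 2 ≤ f.roots.count a ∨ 2 ≤ f.roots.count b) with h2 | h2
    · exact ⟨a, hdouble a ha h2, c, hmemg c hc', by intro h; rw [h] at hc; linarith [hc.1]⟩
    · exact ⟨c, hmemg c hc', b, hdouble b hb h2, by intro h; rw [h] at hc; linarith [hc.2]⟩

lemma exists_fn' (p : ℕ) (M : Multiset ℝ) (h : Multiset.card M = p) :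
    ∃ y : Fin p → ℝ, Multiset.map y Finset.univ.val = M := by
  subst h; exact exists_fn M

lemma choose_cast_id (n j : ℕ) (hj : j ≤ n) :
    ((n:ℝ)+1) * ((n.choose j : ℕ) : ℝ) = (((n+1).choose j : ℕ) : ℝ) * (((n+1-j : ℕ)) : ℝ) := by
  have h1 : (n+1) * n.choose j = (n+1).choose (j+1) * (j+1) := Nat.add_one_mul_choose_eq n j
  have h2 : (n+1).choose (j+1) * (j+1) = (n+1).choose j * ((n+1) - j) := Nat.choose_succ_right_eq (n+1) j
  have h3 : (n+1) * n.choose j = (n+1).choose j * ((n+1) - j) := h1.trans h2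
  exact_mod_cast h3

lemma newton_multiset (p : ℕ) : ∀ (M : Multiset ℝ), Multiset.card M = p →
    ∀ m : ℕ, 1 ≤ m → m + 1 ≤ p → M.esymm (m+1) ≠ 0 →
    (∃ a ∈ M, ∃ b ∈ M, a ≠ b) →
    M.esymm (m-1) * M.esymm (m+1) * ((p.choose m : ℕ) : ℝ)^2
      < (M.esymm m)^2 * (((p.choose (m-1) : ℕ) : ℝ) * ((p.choose (m+1) : ℕ) : ℝ)) := by
  induction p with
  | zero => intro M hM m hm hmp hne hnc; omega
  | succ n ih =>
    intro M hM m hm hmp hne hnc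
    obtain hm1 | hm1 : m + 1 = n + 1 ∨ m + 1 ≤ n := by omega
    · -- top case
      obtain ⟨y, hy⟩ := exists_fn' (m+1) M (by omega)
      have hes : ∀ j, M.esymm j = sigmaE (m+1) j y := by
        intro j
        rw [← hy, ← sigmaE_eq_esymm]
      have hy0 : sigmaE (m+1) (m+1) y ≠ 0 := by rw [← hes]; exact hne
      have hnc' : ∃ i j, y i ≠ y j := by
        obtain ⟨a, haM, b, hbM, hab⟩ := hnc
        rw [← hy] at haM hbM
        obtain ⟨i, _, rfl⟩ := Multiset.mem_map.1 haM
        obtain ⟨j, _, rfl⟩ := Multiset.mem_map.1 hbM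
        exact ⟨i, j, hab⟩
      have := newton_top m hm y hy0 hnc'
      rw [hes (m-1), hes m, hes (m+1), ← hm1]
      exact this
    · -- inductive step via derivative
      have hn3 : 3 ≤ n + 1 := by omega
      set f := (M.map fun r => Polynomial.X - Polynomial.C r).prod with hf
      have hfmonic : f.Monic :=
        Polynomial.monic_multiset_prod_of_monic _ _ (fun a _ => Polynomial.monic_X_sub_C a)
      have hfroots : f.roots = M := Polynomial.roots_multiset_prod_X_sub_C M
      have hfdeg : f.natDegree = n + 1 := by
        rw [hf, Polynomial.natDegree_multiset_prod_of_monic _ (fun a ha => by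
          obtain ⟨r, _, rfl⟩ := Multiset.mem_map.1 ha
          exact Polynomial.monic_X_sub_C r)]
        simp [Multiset.map_map, Function.comp_def, Polynomial.natDegree_X_sub_C, hM]
        omega
      have hf0 : f ≠ 0 := hfmonic.ne_zero
      set g := Polynomial.derivative f with hg
      have hgdegW : g.degree = ((f.natDegree - 1 : ℕ) : WithBot ℕ) :=
        Polynomial.degree_derivative_eq f (by omega)
      have hgdeg : g.natDegree = n := by
        rw [Polynomial.natDegree_eq_of_degree_eq_some hgdegW, hfdeg]
        omega
      have hg0 : g ≠ 0 := by
        intro h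
        rw [h, Polynomial.natDegree_zero] at hgdeg
        omega
      have hgcard : Multiset.card g.roots = n := by
        have h1 := Polynomial.card_roots' g
        rw [hgdeg] at h1
        have h2 := Polynomial.card_roots_le_derivative f
        rw [← hg] at h2
        rw [hfroots, hM] at h2
        omega
      set N := g.roots with hN
      have hlead : g.leadingCoeff = (n:ℝ) + 1 := by
        rw [Polynomial.leadingCoeff, hgdeg, hg, Polynomial.coeff_derivative]
        have : f.coeff (n + 1) = 1 := by
          rw [← hfdeg]; exact hfmonic.coeff_natDegree
        rw [this]
        push_cast
        ring
      -- transfer of esymm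
      have hT : ∀ j, j ≤ n → ((n:ℝ)+1) * N.esymm j = (((n+1-j : ℕ)) : ℝ) * M.esymm j := by
        intro j hj
        have E1 : g.coeff (n - j) = (-1:ℝ)^j * M.esymm j * (((n+1-j : ℕ)) : ℝ) := by
          rw [hg, Polynomial.coeff_derivative]
          have h1 : n - j + 1 = (n+1) - j := by omega
          have h2 : f.coeff ((n+1) - j) = (-1:ℝ)^j * M.esymm j := by
            have h3 := Multiset.prod_X_sub_C_coeff M (show (n+1) - j ≤ Multiset.card M by omega)
            rw [← hf] at h3
            rw [h3, hM]
            congr 2 <;> omega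
          rw [h1, h2]
          have h4 : ((n - j : ℕ) : ℝ) + 1 = (((n+1-j : ℕ)) : ℝ) := by
            rw [Nat.cast_sub (by omega), Nat.cast_sub (by omega)]
            push_cast
            ring
          rw [h4]
        have E2 : g.coeff (n - j) = ((n:ℝ)+1) * (-1:ℝ)^j * N.esymm j := by
          have h5 := Polynomial.coeff_eq_esymm_roots_of_card
            (p := g) (by rw [hgdeg]; exact hgcard) (show n - j ≤ g.natDegree by omega)
          rw [hgdeg] at h5
          have h6 : n - (n - j) = j := by omega
          rw [h6] at h5
          rw [h5, hlead]
        have key : (-1:ℝ)^j * (((n:ℝ)+1) * N.esymm j) = (-1:ℝ)^j * ((((n+1-j : ℕ)) : ℝ) * M.esymm j) := by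
          linear_combination E2.symm - E1.symm
        exact mul_left_cancel₀ (pow_ne_zero j (by norm_num : (-1:ℝ) ≠ 0)) key
      -- N has two distinct elements
      have hNnc : ∃ a ∈ N, ∃ b ∈ N, a ≠ b := by
        obtain ⟨a, haM, b, hbM, hab⟩ := hnc
        have hcard' : Multiset.card f.roots = f.natDegree := by
          rw [hfroots, hM, hfdeg]
        obtain ⟨u, hu, v, hv, huv⟩ := derivative_two_roots f hcard' (by omega) a b
          (hfroots ▸ haM) (hfroots ▸ hbM) hab
        exact ⟨u, hu, v, hv, huv⟩
      -- esymm (m+1) N ≠ 0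
      have hcC0 : (1:ℝ) ≤ (((n+1-(m+1) : ℕ)) : ℝ) := by
        have : 1 ≤ n+1-(m+1) := by omega
        exact_mod_cast this
      have hNe : N.esymm (m+1) ≠ 0 := by
        intro h
        have h7 := hT (m+1) (by omega)
        rw [h, mul_zero] at h7
        rcases mul_eq_zero.1 h7.symm with h8 | h8
        · exact absurd h8 (by linarith)
        · exact hne h8
      have IH := ih N hgcard m hm hm1 hNe hNnc
      -- algebra to pass binomials from n to n+1
      set P1 : ℝ := (n:ℝ) + 1 with hP1
      set NA := N.esymm (m-1); set NB := N.esymm m; set NC := N.esymm (m+1)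
      set MA := M.esymm (m-1); set MB := M.esymm m; set MC := M.esymm (m+1)
      set cA : ℝ := (((n+1-(m-1) : ℕ)) : ℝ); set cB : ℝ := (((n+1-m : ℕ)) : ℝ)
      set cC : ℝ := (((n+1-(m+1) : ℕ)) : ℝ)
      set DnA : ℝ := ((n.choose (m-1) : ℕ) : ℝ); set DnB : ℝ := ((n.choose m : ℕ) : ℝ)
      set DnC : ℝ := ((n.choose (m+1) : ℕ) : ℝ)
      set DpA : ℝ := (((n+1).choose (m-1) : ℕ) : ℝ); set DpB : ℝ := (((n+1).choose m : ℕ) : ℝ)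
      set DpC : ℝ := (((n+1).choose (m+1) : ℕ) : ℝ)
      have eA : P1 * NA = cA * MA := hT (m-1) (by omega)
      have eB : P1 * NB = cB * MB := hT m (by omega)
      have eC : P1 * NC = cC * MC := hT (m+1) (by omega)
      have dA : P1 * DnA = DpA * cA := choose_cast_id n (m-1) (by omega)
      have dB : P1 * DnB = DpB * cB := choose_cast_id n m (by omega)
      have dC : P1 * DnC = DpC * cC := choose_cast_id n (m+1) (by omega)
      have hcA : (0:ℝ) < cA := by
        have : 1 ≤ n+1-(m-1) := by omega
        have := (Nat.one_le_cast (α := ℝ)).2 this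
        linarith
      have hcB : (0:ℝ) < cB := by
        have : 1 ≤ n+1-m := by omega
        have := (Nat.one_le_cast (α := ℝ)).2 this
        linarith
      have hcC : (0:ℝ) < cC := by linarith
      have hK : (0:ℝ) < cA * cC * cB^2 := by positivity
      have hP4 : (0:ℝ) < P1^4 := by positivity
      have L : P1^4 * (NA * NC * DnB^2) = (cA * cC * cB^2) * (MA * MC * DpB^2) := by
        linear_combination (P1*NC*(P1*DnB)^2) * eA + (cA*MA*(P1*DnB)^2) * eC
          + (cA*MA*cC*MC*(P1*DnB + cB*DpB)) * dB
      have R : P1^4 * (NB^2 * (DnA * DnC)) = (cA * cC * cB^2) * (MB^2 * (DpA * DpC)) := by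
        linear_combination ((P1*NB + cB*MB)*(P1*DnA)*(P1*DnC)) * eB
          + (cB^2*MB^2*P1*DnC) * dA + (cB^2*MB^2*cA*DpA) * dC
      have hfin : (cA * cC * cB^2) * (MA * MC * DpB^2) < (cA * cC * cB^2) * (MB^2 * (DpA * DpC)) := by
        rw [← L, ← R]
        exact (mul_lt_mul_iff_right₀ hP4).2 IH
      exact (mul_lt_mul_iff_right₀ hK).1 hfin

lemma Hnorm_pos {n k : ℕ} {x : Fin n → ℝ} (hx : x ∈ GardingCone n k) (hkn : k ≤ n)
    {t : ℕ} (ht : t ≤ k) : 0 < Hnorm n t x := by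
  rcases Nat.eq_zero_or_pos t with rfl | ht1
  · rw [Hnorm, sigmaE_zero]
    simp
  · exact div_pos (hx t ht1 ht) (by exact_mod_cast Nat.choose_pos (le_trans ht hkn))

lemma newton_Hnorm {n k : ℕ} {x : Fin n → ℝ} (hx : x ∈ GardingCone n k) (hkn : k ≤ n)
    {m : ℕ} (hm : 1 ≤ m) (hmk : m + 1 ≤ k) (hnc : ∃ i j, x i ≠ x j) :
    Hnorm n (m-1) x * Hnorm n (m+1) x < Hnorm n m x ^ 2 := by
  have hM : Multiset.card (Multiset.map x Finset.univ.val) = n := by simp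
  have hne : (Multiset.map x Finset.univ.val).esymm (m+1) ≠ 0 := by
    rw [← sigmaE_eq_esymm]
    exact ne_of_gt (hx (m+1) (by omega) hmk)
  have hnc' : ∃ p ∈ (Multiset.map x Finset.univ.val), ∃ q ∈ (Multiset.map x Finset.univ.val), p ≠ q := by
    obtain ⟨i, j, hij⟩ := hnc
    exact ⟨x i, Multiset.mem_map.2 ⟨i, by simp⟩, x j, Multiset.mem_map.2 ⟨j, by simp⟩, hij⟩
  have key := newton_multiset n _ hM m hm (by omega) hne hnc'
  rw [← sigmaE_eq_esymm, ← sigmaE_eq_esymm, ← sigmaE_eq_esymm] at key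
  have h1 : (0:ℝ) < ((n.choose (m-1) : ℕ) : ℝ) * ((n.choose (m+1) : ℕ) : ℝ) := by
    have := Nat.choose_pos (show m-1 ≤ n by omega)
    have := Nat.choose_pos (show m+1 ≤ n by omega)
    positivity
  have h2 : (0:ℝ) < ((n.choose m : ℕ) : ℝ)^2 := by
    have := Nat.choose_pos (show m ≤ n by omega)
    positivity
  rw [Hnorm, Hnorm, Hnorm, div_mul_div_comm, div_pow, div_lt_div_iff₀ h1 h2]
  calc sigmaE n (m-1) x * sigmaE n (m+1) x * ((n.choose m : ℕ) : ℝ)^2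
      < (sigmaE n m x)^2 * (((n.choose (m-1) : ℕ) : ℝ) * ((n.choose (m+1) : ℕ) : ℝ)) := key
    _ = (sigmaE n m x)^2 * (((n.choose (m-1) : ℕ) : ℝ) * ((n.choose (m+1) : ℕ) : ℝ)) := rfl

lemma Hnorm_const {n j : ℕ} (hj : j ≤ n) (c : ℝ) : Hnorm n j (fun _ => c) = c ^ j := by
  rw [Hnorm, sigmaE]
  rw [Finset.sum_congr rfl (fun s hs => by
    rw [Finset.prod_const, (Finset.mem_powersetCard.1 hs).2])]
  rw [Finset.sum_const, Finset.card_powersetCard, Finset.card_univ, Fintype.card_fin,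
    nsmul_eq_mul]
  have : ((n.choose j : ℕ) : ℝ) ≠ 0 := by
    exact_mod_cast (Nat.choose_pos hj).ne'
  field_simp

lemma GEN_strict {n k : ℕ} {x : Fin n → ℝ} (hx : x ∈ GardingCone n k) (hkn : k ≤ n)
    {i j : ℕ} (hi : 1 ≤ i) (hij : i < j) (hjk : j ≤ k) (hnc : ∃ p q, x p ≠ x q) :
    Hnorm n (i-1) x * Hnorm n j x < Hnorm n i x * Hnorm n (j-1) x := by
  have hH : ∀ t, t ≤ k → 0 < Hnorm n t x := fun t ht => Hnorm_pos hx hkn ht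
  revert hjk
  induction j, hij using Nat.le_induction with
  | base =>
    intro hjk
    have := newton_Hnorm hx hkn hi (by omega) hnc
    rw [sq] at this
    simpa using this
  | succ j hj IH =>
    intro hjk
    have IH' := IH (by omega)
    have NW := newton_Hnorm hx hkn (show 1 ≤ j by omega) (by omega) hnc
    simp only [Nat.add_sub_cancel] at *
    have h1 : 0 < Hnorm n (i-1) x := hH _ (by omega)
    have h2 : 0 < Hnorm n i x := hH _ (by omega)
    have h3 : 0 < Hnorm n (j-1) x := hH _ (by omega)
    have h4 : 0 < Hnorm n j x := hH _ (by omega)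
    have h5 : 0 < Hnorm n (j+1) x := hH _ (by omega)
    have hmm := mul_lt_mul'' IH' NW (by positivity) (by positivity)
    nlinarith [mul_pos h3 h4, mul_pos h2 h4, mul_pos h1 h5]

lemma GEN_le {n k : ℕ} {x : Fin n → ℝ} (hx : x ∈ GardingCone n k) (hkn : k ≤ n)
    {i j : ℕ} (hi : 1 ≤ i) (hij : i < j) (hjk : j ≤ k) :
    Hnorm n (i-1) x * Hnorm n j x ≤ Hnorm n i x * Hnorm n (j-1) x := by
  by_cases hnc : ∃ p q, x p ≠ x q
  · exact (GEN_strict hx hkn hi hij hjk hnc).le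
  · push_neg at hnc
    have hn2 : 2 ≤ n := by omega
    have hconst : x = fun _ => x ⟨0, by omega⟩ := funext (fun p => hnc p ⟨0, by omega⟩)
    set c := x ⟨0, by omega⟩
    rw [hconst, Hnorm_const (by omega), Hnorm_const (by omega), Hnorm_const (by omega),
      Hnorm_const (by omega)]
    apply le_of_eq
    rw [← pow_add, ← pow_add]
    congr 1
    omega


/-- Weighted sum comparison: let `λ ∈ Γ_k⁺`, `2 ≤ l ≤ k ≤ n`, and let
`a_1,…,a_{l-1} ≥ 0`, `b_l,…,b_k ≥ 0`, not all zero, with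
`∑_{i=1}^{l-1} a_i H_i(λ) = ∑_{j=l}^{k} b_j H_j(λ) > 0`. Then
`∑_{j=l}^{k} b_j H_{j-1}(λ) ≥ ∑_{i=1}^{l-1} a_i H_{i-1}(λ)`, with equality only if
`λ = c(1,…,1)`. -/
theorem stmt17 (n k l : ℕ) (hl : 2 ≤ l) (hlk : l ≤ k) (hkn : k ≤ n)
    (x : Fin n → ℝ) (hx : x ∈ GardingCone n k)
    (a b : ℕ → ℝ) (ha : ∀ i, 0 ≤ a i) (hb : ∀ j, 0 ≤ b j)
    (hne : (∃ i ∈ Finset.Icc 1 (l-1), a i ≠ 0) ∨ ∃ j ∈ Finset.Icc l k, b j ≠ 0)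
    (heq : ∑ i ∈ Finset.Icc 1 (l-1), a i * Hnorm n i x
      = ∑ j ∈ Finset.Icc l k, b j * Hnorm n j x)
    (hpos : 0 < ∑ j ∈ Finset.Icc l k, b j * Hnorm n j x) :
    ∑ j ∈ Finset.Icc l k, b j * Hnorm n (j-1) x
      ≥ ∑ i ∈ Finset.Icc 1 (l-1), a i * Hnorm n (i-1) x ∧
    (∑ j ∈ Finset.Icc l k, b j * Hnorm n (j-1) x
        = ∑ i ∈ Finset.Icc 1 (l-1), a i * Hnorm n (i-1) x →
      ∃ c : ℝ, ∀ p, x p = c) := by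
  classical
  have hH : ∀ t, t ≤ k → 0 < Hnorm n t x := fun t ht => Hnorm_pos hx hkn ht
  set Sa := ∑ i ∈ Finset.Icc 1 (l-1), a i * Hnorm n (i-1) x with hSa
  set Sb := ∑ j ∈ Finset.Icc l k, b j * Hnorm n (j-1) x with hSb
  set Ta := ∑ i ∈ Finset.Icc 1 (l-1), a i * Hnorm n i x with hTa
  set Tb := ∑ j ∈ Finset.Icc l k, b j * Hnorm n j x with hTb
  have hbound : ∀ i ∈ Finset.Icc 1 (l-1), ∀ j ∈ Finset.Icc l k,
      (1 ≤ i ∧ i < j ∧ j ≤ k) := by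
    intro i hi j hj
    rw [Finset.mem_Icc] at hi hj
    omega
  have hL : Sa * Tb = ∑ i ∈ Finset.Icc 1 (l-1), ∑ j ∈ Finset.Icc l k,
      a i * b j * (Hnorm n (i-1) x * Hnorm n j x) := by
    rw [hSa, hTb, Finset.sum_mul_sum]
    exact Finset.sum_congr rfl (fun i _ => Finset.sum_congr rfl (fun j _ => by ring))
  have hR : Ta * Sb = ∑ i ∈ Finset.Icc 1 (l-1), ∑ j ∈ Finset.Icc l k,
      a i * b j * (Hnorm n i x * Hnorm n (j-1) x) := by
    rw [hTa, hSb, Finset.sum_mul_sum]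
    exact Finset.sum_congr rfl (fun i _ => Finset.sum_congr rfl (fun j _ => by ring))
  have hterm_le : ∀ i ∈ Finset.Icc 1 (l-1), ∀ j ∈ Finset.Icc l k,
      a i * b j * (Hnorm n (i-1) x * Hnorm n j x)
        ≤ a i * b j * (Hnorm n i x * Hnorm n (j-1) x) := by
    intro i hi j hj
    obtain ⟨h1, h2, h3⟩ := hbound i hi j hj
    exact mul_le_mul_of_nonneg_left (GEN_le hx hkn h1 h2 h3) (mul_nonneg (ha i) (hb j))
  have hmain : Sa * Tb ≤ Ta * Sb := by
    rw [hL, hR]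
    exact Finset.sum_le_sum (fun i hi => Finset.sum_le_sum (fun j hj => hterm_le i hi j hj))
  have hSaSb : Sa ≤ Sb := by
    have h := hmain
    rw [heq, mul_comm Tb Sb] at h
    exact le_of_mul_le_mul_right h hpos
  refine ⟨hSaSb, ?_⟩
  intro heq2
  by_cases hc : ∃ c : ℝ, ∀ p, x p = c
  · exact hc
  · exfalso
    have hnc : ∃ p q, x p ≠ x q := by
      by_contra hcon
      push_neg at hcon
      have hn2 : 2 ≤ n := by omega
      exact hc ⟨x ⟨0, by omega⟩, fun p => hcon p ⟨0, by omega⟩⟩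
    have hTapos : 0 < Ta := by rw [heq]; exact hpos
    obtain ⟨i0, hi0, hai0⟩ := Finset.exists_ne_zero_of_sum_ne_zero (ne_of_gt hTapos)
    obtain ⟨j0, hj0, hbj0⟩ := Finset.exists_ne_zero_of_sum_ne_zero (ne_of_gt hpos)
    have hai : 0 < a i0 := lt_of_le_of_ne (ha i0) (fun h => hai0 (by rw [← h]; ring))
    have hbj : 0 < b j0 := lt_of_le_of_ne (hb j0) (fun h => hbj0 (by rw [← h]; ring))
    have hstrict : Sa * Tb < Ta * Sb := by
      rw [hL, hR]
      apply Finset.sum_lt_sum (fun i hi => Finset.sum_le_sum (fun j hj => hterm_le i hi j hj))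
      refine ⟨i0, hi0, ?_⟩
      apply Finset.sum_lt_sum (fun j hj => hterm_le i0 hi0 j hj)
      refine ⟨j0, hj0, ?_⟩
      obtain ⟨h1, h2, h3⟩ := hbound i0 hi0 j0 hj0
      exact mul_lt_mul_of_pos_left (GEN_strict hx hkn h1 h2 h3 hnc) (mul_pos hai hbj)
    rw [heq2, heq, mul_comm Tb Sa] at hstrict
    exact lt_irrefl _ hstrict
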